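/- Let a > 0, b > 0 and for k ≥ 0 let N_k(a,b) denote the (k+1)-st smallest element, with multiplicity, of the multiset {m·a + n·b : m,n nonnegative integers}. Then the sequence (N_k(a,b)) is subadditive: N_{k+l}(a,b) ≤ N_k(a,b) + N_l(a,b) for all k, l ≥ 0. -/

import Mathlib

open Pointwise

instance : DecidableEq (Lex (ℕ × ℕ)) := inferInstanceAs (DecidableEq (ℕ × ℕ))

/-- Cauchy–Davenport for `ℕ × ℕ`, via the lexicographic order. -/
lemma stmt16_cd (A B : Finset (ℕ × ℕ)) (hA : A.Nonempty) (hB : B.Nonempty) :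
    A.card + B.card - 1 ≤ (A + B).card :=
  cauchy_davenport_add_of_linearOrder_isCancelAdd (α := Lex (ℕ × ℕ)) hA hB

lemma stmt16_finite (a b : ℝ) (ha : 0 < a) (hb : 0 < b) (t : ℝ) :
    {p : ℕ × ℕ | (p.1 : ℝ) * a + (p.2 : ℝ) * b ≤ t}.Finite := by
  apply Set.Finite.subset (Set.finite_Iic (⌈t / a⌉₊, ⌈t / b⌉₊))
  rintro ⟨m, n⟩ h
  simp only [Set.mem_setOf_eq] at h
  have hm : (m : ℝ) * a ≤ t := by nlinarith [mul_nonneg (Nat.cast_nonneg (α := ℝ) n) hb.le]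
  have hn : (n : ℝ) * b ≤ t := by nlinarith [mul_nonneg (Nat.cast_nonneg (α := ℝ) m) ha.le]
  have h1 : (m : ℝ) ≤ t / a := (le_div_iff₀ ha).2 hm
  have h2 : (n : ℝ) ≤ t / b := (le_div_iff₀ hb).2 hn
  constructor
  · exact_mod_cast h1.trans (Nat.le_ceil _)
  · exact_mod_cast h2.trans (Nat.le_ceil _)

/-- The set of admissible `t` for the `k`-th value. -/
def stmt16_S (a b : ℝ) (m : ℕ) : Set ℝ :=
  {t : ℝ | m + 1 ≤ Nat.card {p : ℕ × ℕ | (p.1 : ℝ) * a + (p.2 : ℝ) * b ≤ t}}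

lemma stmt16_card_eq (a b : ℝ) (ha : 0 < a) (hb : 0 < b) (t : ℝ) :
    Nat.card {p : ℕ × ℕ | (p.1 : ℝ) * a + (p.2 : ℝ) * b ≤ t} =
      (stmt16_finite a b ha hb t).toFinset.card := by
  rw [Nat.card_coe_set_eq, Set.ncard_eq_toFinset_card _ (stmt16_finite a b ha hb t)]

lemma stmt16_S_nonempty (a b : ℝ) (ha : 0 < a) (hb : 0 < b) (m : ℕ) :
    (stmt16_S a b m).Nonempty := by
  refine ⟨m * a, ?_⟩
  have hfin := stmt16_finite a b ha hb (m * a)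
  show m + 1 ≤ Nat.card _
  rw [stmt16_card_eq a b ha hb]
  have hsub : (Finset.range (m + 1)).image (fun i => ((i, 0) : ℕ × ℕ)) ⊆ hfin.toFinset := by
    intro p hp
    simp only [Finset.mem_image, Finset.mem_range] at hp
    obtain ⟨i, hi, rfl⟩ := hp
    rw [Set.Finite.mem_toFinset]
    simp only [Set.mem_setOf_eq, Nat.cast_zero, zero_mul, add_zero]
    have : (i : ℝ) ≤ m := by exact_mod_cast Nat.lt_succ_iff.1 hi
    nlinarith
  calc m + 1 = ((Finset.range (m + 1)).image (fun i => ((i, 0) : ℕ × ℕ))).card := by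
        rw [Finset.card_image_of_injective _ (fun i j hij => by simpa using hij),
          Finset.card_range]
    _ ≤ _ := Finset.card_le_card hsub

lemma stmt16_S_bddBelow (a b : ℝ) (ha : 0 < a) (hb : 0 < b) (m : ℕ) :
    BddBelow (stmt16_S a b m) := by
  refine ⟨0, fun t ht => ?_⟩
  have h1 : 1 ≤ Nat.card {p : ℕ × ℕ | (p.1 : ℝ) * a + (p.2 : ℝ) * b ≤ t} :=
    le_trans (Nat.le_add_left 1 m) ht
  rw [Nat.card_coe_set_eq] at h1
  have h2 : {p : ℕ × ℕ | (p.1 : ℝ) * a + (p.2 : ℝ) * b ≤ t}.ncard ≠ 0 := by omega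
  obtain ⟨p, hp⟩ := Set.nonempty_of_ncard_ne_zero h2
  simp only [Set.mem_setOf_eq] at hp
  have : (0 : ℝ) ≤ (p.1 : ℝ) * a + (p.2 : ℝ) * b := by positivity
  linarith

lemma stmt16_S_add (a b : ℝ) (ha : 0 < a) (hb : 0 < b) (k l : ℕ) {t s : ℝ}
    (ht : t ∈ stmt16_S a b k) (hs : s ∈ stmt16_S a b l) :
    t + s ∈ stmt16_S a b (k + l) := by
  have hft := stmt16_finite a b ha hb t
  have hfs := stmt16_finite a b ha hb s
  have hfts := stmt16_finite a b ha hb (t + s)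
  have hAcard : k + 1 ≤ hft.toFinset.card := by
    rw [← stmt16_card_eq a b ha hb]; exact ht
  have hBcard : l + 1 ≤ hfs.toFinset.card := by
    rw [← stmt16_card_eq a b ha hb]; exact hs
  have hA : hft.toFinset.Nonempty := Finset.card_pos.1 (by omega)
  have hB : hfs.toFinset.Nonempty := Finset.card_pos.1 (by omega)
  have hsub : hft.toFinset + hfs.toFinset ⊆ hfts.toFinset := by
    intro z hz
    rw [Finset.mem_add] at hz
    obtain ⟨x, hx, y, hy, rfl⟩ := hz
    rw [Set.Finite.mem_toFinset] at hx hy ⊢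
    simp only [Set.mem_setOf_eq, Prod.fst_add, Prod.snd_add] at hx hy ⊢
    push_cast
    nlinarith
  show k + l + 1 ≤ Nat.card _
  rw [stmt16_card_eq a b ha hb]
  calc k + l + 1 ≤ hft.toFinset.card + hfs.toFinset.card - 1 := by omega
    _ ≤ (hft.toFinset + hfs.toFinset).card := stmt16_cd _ _ hA hB
    _ ≤ hfts.toFinset.card := Finset.card_le_card hsub

theorem stmt_16 (a b : ℝ) (ha : 0 < a) (hb : 0 < b) :
    let N : ℕ → ℝ := fun k =>
      sInf {t : ℝ | k + 1 ≤ Nat.card {p : ℕ × ℕ | (p.1 : ℝ) * a + (p.2 : ℝ) * b ≤ t}}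
    ∀ k l : ℕ, N (k + l) ≤ N k + N l := by
  intro N k l
  show sInf (stmt16_S a b (k + l)) ≤ sInf (stmt16_S a b k) + sInf (stmt16_S a b l)
  refine le_of_forall_pos_le_add fun ε hε => ?_
  obtain ⟨t, ht, htlt⟩ := Real.lt_sInf_add_pos (stmt16_S_nonempty a b ha hb k) (half_pos hε)
  obtain ⟨s, hs, hslt⟩ := Real.lt_sInf_add_pos (stmt16_S_nonempty a b ha hb l) (half_pos hε)
  have hmem := stmt16_S_add a b ha hb k l ht hs
  have h1 : sInf (stmt16_S a b (k + l)) ≤ t + s :=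
    csInf_le (stmt16_S_bddBelow a b ha hb (k + l)) hmem
  linarith
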